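/- If Σ_{i=1}^{N−1} c_i² ≤ 1, then for every η > 0 the quadratic penalty function w ↦ Q(w;η) = F(w) + (1/(4η))‖Dw‖² is convex on ℝ^{Nn}. -/

import Mathlib

open scoped BigOperators InnerProductSpace

noncomputable section

/-- Block space `ℝ^{Nn}` with `N = K+1` blocks of size `n`, with the Euclidean norm. -/
abbrev Blk (K n : ℕ) : Type := PiLp 2 fun _ : Fin (K + 1) => EuclideanSpace ℝ (Fin n)

/-- `Dmap c w = w_N − Σ_{i=1}^{N−1} c_i w_i`. -/
def Dmap {K n : ℕ} (c : Fin K → ℝ) (w : Blk K n) : EuclideanSpace ℝ (Fin n) :=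
  w (Fin.last K) - ∑ i : Fin K, c i • w i.castSucc

/-- `f(w) = Σ_i ‖A w_i − b_i‖²`. -/
def fobj {K m n : ℕ} (A : Matrix (Fin m) (Fin n) ℝ) (b : Blk K m) (w : Blk K n) : ℝ :=
  ∑ i : Fin (K + 1), ‖Matrix.toEuclideanLin A (w i) - b i‖ ^ 2

/-- `F(w) = f(w) − (1/2)‖A(Dw) − Db‖²`. -/
def Fobj {K m n : ℕ} (A : Matrix (Fin m) (Fin n) ℝ) (b : Blk K m) (c : Fin K → ℝ)
    (w : Blk K n) : ℝ :=
  fobj A b w - (1 / 2) * ‖Matrix.toEuclideanLin A (Dmap c w) - Dmap c b‖ ^ 2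

/-- The quadratic penalty function `Q(w;η) = F(w) + (1/(4η))‖Dw‖²`. -/
def Qpen {K m n : ℕ} (A : Matrix (Fin m) (Fin n) ℝ) (b : Blk K m) (c : Fin K → ℝ)
    (η : ℝ) (w : Blk K n) : ℝ :=
  Fobj A b c w + (1 / (4 * η)) * ‖Dmap c w‖ ^ 2

/-- The adjoint `Dᵀ` of `Dmap`, given blockwise by `(Dᵀu)_i = −c_i u` for `i < N` and
`(Dᵀu)_N = u`. -/
def DmapT {K n : ℕ} (c : Fin K → ℝ) (u : EuclideanSpace ℝ (Fin n)) : Blk K n :=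
  WithLp.toLp 2 (Fin.snoc (fun i : Fin K => -(c i) • u) u)

/-- If `Σ c_i² ≤ 1`, then for every `η > 0` the quadratic penalty function
`w ↦ Q(w;η)` is convex on `ℝ^{Nn}`. -/
lemma combo_norm_sq {E : Type*} [NormedAddCommGroup E] [InnerProductSpace ℝ E]
    (u v : E) {a b : ℝ} (hab : a + b = 1) :
    ‖a•u + b•v‖^2 = a*‖u‖^2 + b*‖v‖^2 - a*b*‖u-v‖^2 := by
  simp only [← real_inner_self_eq_norm_sq, inner_add_left, inner_add_right,
    inner_sub_left, inner_sub_right, real_inner_smul_left, real_inner_smul_right]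
  have hcm := real_inner_comm u v
  have hb' : b = 1 - a := by linarith
  subst hb'
  nlinarith [hcm]

lemma combo_pt {E : Type*} [AddCommGroup E] [Module ℝ E]
    (p q r : E) {a b : ℝ} (hab : a + b = 1) :
    a•p + b•q - r = a•(p-r) + b•(q-r) := by
  have hb' : b = 1 - a := by linarith
  subst hb'
  module

lemma Dmap_smul {K n : ℕ} (c : Fin K → ℝ) (a : ℝ) (w : Blk K n) :
    Dmap c (a • w) = a • Dmap c w := by
  simp only [Dmap, PiLp.smul_apply, smul_sub, Finset.smul_sum, smul_comm a]

lemma Dmap_add {K n : ℕ} (c : Fin K → ℝ) (x y : Blk K n) :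
    Dmap c (x + y) = Dmap c x + Dmap c y := by
  simp only [Dmap, PiLp.add_apply, smul_add, Finset.sum_add_distrib]
  abel

lemma Dmap_sub {K n : ℕ} (c : Fin K → ℝ) (x y : Blk K n) :
    Dmap c (x - y) = Dmap c x - Dmap c y := by
  simp only [Dmap, PiLp.sub_apply, smul_sub, Finset.sum_sub_distrib]
  abel

lemma key_bound {K m n : ℕ} (A : Matrix (Fin m) (Fin n) ℝ) (c : Fin K → ℝ)
    (hc : ∀ i, 0 ≤ c i) (hc1 : ∑ i, c i ^ 2 ≤ 1) (d : Blk K n) :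
    ‖Matrix.toEuclideanLin A (Dmap c d)‖^2 ≤
      2 * ∑ i : Fin (K+1), ‖Matrix.toEuclideanLin A (d i)‖^2 := by
  set T := Matrix.toEuclideanLin A with hT
  set r : Fin (K+1) → ℝ := fun i => ‖T (d i)‖ with hr
  have hstep : ‖T (Dmap c d)‖ ≤ r (Fin.last K) + ∑ i : Fin K, c i * r i.castSucc := by
    have : T (Dmap c d) = T (d (Fin.last K)) - ∑ i : Fin K, c i • T (d i.castSucc) := by
      simp [Dmap, map_sub, map_sum, map_smul]
    rw [this]
    refine (norm_sub_le _ _).trans ?_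
    gcongr
    refine (norm_sum_le _ _).trans ?_
    apply Finset.sum_le_sum
    intro i _
    rw [norm_smul, Real.norm_eq_abs, abs_of_nonneg (hc i)]
  have hr0 : ∀ i, 0 ≤ r i := fun i => norm_nonneg _
  have hsq : ‖T (Dmap c d)‖^2 ≤ (r (Fin.last K) + ∑ i : Fin K, c i * r i.castSucc)^2 :=
    pow_le_pow_left₀ (norm_nonneg _) hstep 2
  set f : Fin (K+1) → ℝ := Fin.snoc c 1 with hf
  have hfr : r (Fin.last K) + ∑ i : Fin K, c i * r i.castSucc
      = ∑ i : Fin (K+1), f i * r i := by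
    rw [Fin.sum_univ_castSucc]
    simp [hf, add_comm]
  have hCS : (∑ i : Fin (K+1), f i * r i)^2 ≤
      (∑ i : Fin (K+1), f i ^2) * (∑ i : Fin (K+1), r i ^2) :=
    Finset.sum_mul_sq_le_sq_mul_sq Finset.univ f r
  have hf2 : ∑ i : Fin (K+1), f i ^ 2 ≤ 2 := by
    rw [Fin.sum_univ_castSucc]
    simp only [hf, Fin.snoc_castSucc, Fin.snoc_last]
    linarith
  calc ‖T (Dmap c d)‖^2 ≤ (∑ i : Fin (K+1), f i * r i)^2 := by rw [← hfr]; exact hsq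
    _ ≤ (∑ i : Fin (K+1), f i ^2) * (∑ i : Fin (K+1), r i ^2) := hCS
    _ ≤ 2 * ∑ i : Fin (K+1), r i ^2 :=
        mul_le_mul_of_nonneg_right hf2 (Finset.sum_nonneg fun i _ => sq_nonneg _)


theorem stmt6 {K m n : ℕ} (A : Matrix (Fin m) (Fin n) ℝ) (b : Blk K m)
    (c : Fin K → ℝ) (hc : ∀ i, 0 ≤ c i) (hc1 : ∑ i, c i ^ 2 ≤ 1)
    (η : ℝ) (hη : 0 < η) :
    ConvexOn ℝ Set.univ (Qpen A b c η) := by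
  refine ⟨convex_univ, ?_⟩
  intro x _ y _ a t ha ht hab
  set T := Matrix.toEuclideanLin A with hT
  set z : Blk K n := a • x + t • y with hz
  set d : Blk K n := x - y with hd
  -- blockwise terms
  have hzi : ∀ i : Fin (K+1), z i = a • x i + t • y i := fun i => rfl
  have e1 : ∀ i : Fin (K+1),
      ‖T (z i) - b i‖^2 = a*‖T (x i) - b i‖^2 + t*‖T (y i) - b i‖^2
        - a*t*‖T (d i)‖^2 := by
    intro i
    have h1 : T (z i) - b i = a•(T (x i) - b i) + t•(T (y i) - b i) := by
      rw [hzi, map_add, map_smul, map_smul]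
      exact combo_pt _ _ _ hab
    have h2 : (T (x i) - b i) - (T (y i) - b i) = T (d i) := by
      have : d i = x i - y i := rfl
      rw [this, map_sub]; abel
    rw [h1, combo_norm_sq _ _ hab, h2]
  -- Dmap term for F
  have hDz : Dmap c z = a • Dmap c x + t • Dmap c y := by
    rw [hz, Dmap_add, Dmap_smul, Dmap_smul]
  have e2 : ‖T (Dmap c z) - Dmap c b‖^2
      = a*‖T (Dmap c x) - Dmap c b‖^2 + t*‖T (Dmap c y) - Dmap c b‖^2
        - a*t*‖T (Dmap c d)‖^2 := by
    have h1 : T (Dmap c z) - Dmap c b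
        = a•(T (Dmap c x) - Dmap c b) + t•(T (Dmap c y) - Dmap c b) := by
      rw [hDz, map_add, map_smul, map_smul]
      exact combo_pt _ _ _ hab
    have h2 : (T (Dmap c x) - Dmap c b) - (T (Dmap c y) - Dmap c b) = T (Dmap c d) := by
      rw [hd, Dmap_sub, map_sub]; abel
    rw [h1, combo_norm_sq _ _ hab, h2]
  -- penalty term
  have e3 : ‖Dmap c z‖^2 = a*‖Dmap c x‖^2 + t*‖Dmap c y‖^2 - a*t*‖Dmap c d‖^2 := by
    have h2 : Dmap c x - Dmap c y = Dmap c d := (Dmap_sub c x y).symm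
    rw [hDz, combo_norm_sq _ _ hab, h2]
  -- the quadratic-form slack
  have hkey : ‖T (Dmap c d)‖^2 ≤ 2 * ∑ i : Fin (K+1), ‖T (d i)‖^2 :=
    key_bound A c hc hc1 d
  have hpen : 0 ≤ (1 / (4 * η)) * ‖Dmap c d‖^2 := by positivity
  have hat : 0 ≤ a * t := mul_nonneg ha ht
  -- expand Qpen
  simp only [Qpen, Fobj, fobj, smul_eq_mul]
  simp only [← hT]
  rw [e2, e3, Finset.sum_congr rfl (fun i _ => e1 i)]
  rw [Finset.sum_sub_distrib, Finset.sum_add_distrib, ← Finset.mul_sum, ← Finset.mul_sum,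
    ← Finset.mul_sum]
  set S1 := ∑ i : Fin (K+1), ‖T (x i) - b i‖^2
  set S2 := ∑ i : Fin (K+1), ‖T (y i) - b i‖^2
  set S3 := ∑ i : Fin (K+1), ‖T (d i)‖^2
  nlinarith [mul_nonneg hat (sub_nonneg.mpr (le_of_lt hη)), sq_nonneg (‖Dmap c d‖),
    mul_nonneg hat hpen, mul_nonneg hat (sub_nonneg.mpr hkey)]
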